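/- Let $K$ be a field, $\xi \in K$ a nonzero element, and $t, i, j \in \mathbb{Z}$. Define $R(k,l) = \xi^{t(j-l)} - \xi^{t(k-1)-i}$ for $0 \le l < k$ and $R(k,k) = 1$. Define $\lambda(k,l)$ recursively by $\lambda(0,0) = 1$, and for $k \ge 1$: $\lambda(k,0) = R(k,0)\lambda(k-1,0)$, $\lambda(k,l) = R(k,l)\lambda(k-1,l) + \lambda(k-1,l-1)$ for $0 < l < k$, and $\lambda(k,k) = 1$. Then for all $0 \le p \le k$, $\lambda(k,p) = \binom{k}{p}_{\xi^t} \cdot \xi^{-t(k-p)p} \cdot \prod_{l=p+1}^{k} R(l,0)$, where $\binom{k}{p}_{q}$ denotes the Gaussian ($q$-)binomial coefficient evaluated at $q = \xi^t$, and the empty product (when $p = k$) equals $1$. -/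

import Mathlib

/-- Gaussian (q-)binomial coefficient, via the q-Pascal recursion
`C(n+1,p+1)_q = C(n,p)_q + q^(p+1) * C(n,p+1)_q`. -/
def qBinom {A : Type*} [Ring A] (q : A) : ℕ → ℕ → A
  | _, 0 => 1
  | 0, _ + 1 => 0
  | n + 1, p + 1 => qBinom q n p + q ^ (p + 1) * qBinom q n (p + 1)

/-- `R(k,l) = ξ^{t(j-l)} - ξ^{t(k-1)-i}` for `l < k`, and `R(k,k) = 1`. -/
def Rc {K : Type*} [Field K] (ξ : K) (t i j : ℤ) (k l : ℕ) : K :=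
  if l < k then ξ ^ (t * (j - (l : ℤ))) - ξ ^ (t * ((k : ℤ) - 1) - i) else 1

/-- The recursively defined coefficients `λ(k,l)`. -/
def lam {K : Type*} [Field K] (ξ : K) (t i j : ℤ) : ℕ → ℕ → K
  | 0, 0 => 1
  | 0, _ + 1 => 0
  | k + 1, 0 => Rc ξ t i j (k + 1) 0 * lam ξ t i j k 0
  | k + 1, l + 1 =>
      if l + 1 = k + 1 then 1
      else if l + 1 < k + 1 then
        Rc ξ t i j (k + 1) (l + 1) * lam ξ t i j k (l + 1) + lam ξ t i j k l
      else 0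

section Lemmas
variable {A : Type*} [CommRing A] (q : A)

lemma qBinom_zero (n : ℕ) : qBinom q n 0 = 1 := by cases n <;> rfl

lemma qBinom_eq_zero {n p : ℕ} (h : n < p) : qBinom q n p = 0 := by
  induction n generalizing p with
  | zero => cases p with | zero => omega | succ p => rfl
  | succ n ih =>
    cases p with
    | zero => omega
    | succ p =>
      show qBinom q n p + q ^ (p + 1) * qBinom q n (p + 1) = 0
      rw [ih (by omega), ih (by omega)]; ring

lemma qBinom_self (n : ℕ) : qBinom q n n = 1 := by
  induction n with
  | zero => rfl
  | succ n ih =>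
    show qBinom q n n + q ^ (n + 1) * qBinom q n (n + 1) = 1
    rw [ih, qBinom_eq_zero q (by omega)]; ring

lemma qBinom_B (n p : ℕ) :
    (q ^ (p + 1) - 1) * qBinom q n (p + 1) = (q ^ (n - p) - 1) * qBinom q n p := by
  induction n generalizing p with
  | zero =>
    cases p with
    | zero => simp [qBinom]
    | succ p => simp [qBinom, qBinom_eq_zero]
  | succ n ih =>
    rcases le_or_gt (n + 1) p with h | h
    · rw [qBinom_eq_zero q (by omega)]
      rcases eq_or_lt_of_le h with h' | h'
      · rw [← h']; simp
      · rw [qBinom_eq_zero q (by omega)]; ring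
    · cases p with
      | zero =>
        show (q^1 - 1) * (qBinom q n 0 + q^1 * qBinom q n 1) = (q ^ (n+1) - 1) * qBinom q (n+1) 0
        have h0 := ih 0
        simp only [qBinom_zero, Nat.sub_zero, zero_add, mul_one, pow_one] at h0 ⊢
        linear_combination q * h0
      | succ p =>
        show (q^(p+1+1) - 1) * (qBinom q n (p+1) + q^(p+1+1) * qBinom q n (p+1+1)) =
          (q^(n+1-(p+1)) - 1) * (qBinom q n p + q^(p+1) * qBinom q n (p+1))
        obtain ⟨d, rfl⟩ : ∃ d, n = p + 1 + d := ⟨n - (p+1), by omega⟩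
        have h1 := ih (p+1)
        have h2 := ih p
        simp only [show p+1+d - (p+1) = d from by omega, show p+1+d - p = d+1 from by omega,
          show p+1+d+1 - (p+1) = d+1 from by omega] at h1 h2 ⊢
        linear_combination q^(p+2) * h1 + h2

lemma qBinom_A (m c : ℕ) :
    qBinom q (m+c+1+1) (m+1) = qBinom q (m+c+1) (m+1) + q^(c+1) * qBinom q (m+c+1) m := by
  have hB := qBinom_B q (m+c+1) m
  simp only [show m+c+1-m = c+1 from by omega] at hB
  show qBinom q (m+c+1) m + q^(m+1) * qBinom q (m+c+1) (m+1) = _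
  linear_combination hB

end Lemmas

lemma key {K : Type*} [Field K] (u w : K) (hu : u ≠ 0) (j : ℤ) (m c : ℕ) (X Y : K)
    (hB : (u^(m+1) - 1) * X = (u^(c+1) - 1) * Y) :
    (X + u^(c+1) * Y) * u ^ (-(((c:ℤ)+1) * ((m:ℤ)+1))) * (u^j - u^((m:ℤ)+(c:ℤ)+1) * w)
    = (u^(j - ((m:ℤ)+1)) - u^((m:ℤ)+(c:ℤ)+1) * w) * (X * u^(-((c:ℤ) * ((m:ℤ)+1))))
      + Y * u^(-(((c:ℤ)+1) * (m:ℤ))) * (u^j - u^((m:ℤ)) * w) := by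
  rw [zpow_sub₀ hu]
  rw [show ((c:ℤ)+1) * ((m:ℤ)+1) = (((c+1)*(m+1) : ℕ) : ℤ) by push_cast; ring,
    show (m:ℤ)+(c:ℤ)+1 = ((m+c+1 : ℕ) : ℤ) by push_cast; ring,
    show (m:ℤ)+1 = ((m+1 : ℕ) : ℤ) by push_cast; ring,
    show (c:ℤ) * (((m+1:ℕ)):ℤ) = ((c*(m+1) : ℕ) : ℤ) by push_cast; ring,
    show ((c:ℤ)+1) * (m:ℤ) = (((c+1)*m : ℕ) : ℤ) by push_cast; ring,
    zpow_neg, zpow_neg, zpow_neg, zpow_natCast, zpow_natCast, zpow_natCast, zpow_natCast,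
    zpow_natCast, zpow_natCast]
  set a := u ^ j with ha
  field_simp
  ring_nf
  linear_combination (w * u^(2*c+2*c*m+3*m+2)) * hB


theorem stmt0 {K : Type*} [Field K] (ξ : K) (hξ : ξ ≠ 0) (t i j : ℤ)
    (k p : ℕ) (hpk : p ≤ k) :
    lam ξ t i j k p =
      qBinom (ξ ^ t) k p * ξ ^ (-(t * ((k : ℤ) - (p : ℤ)) * (p : ℤ))) *
        ∏ l ∈ Finset.Icc (p + 1) k, Rc ξ t i j l 0 := by
  induction k generalizing p with
  | zero =>
    interval_cases p
    simp [lam, qBinom_zero]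
  | succ k ih =>
    rcases Nat.eq_zero_or_eq_succ_pred p with hp | hp
    · subst hp
      rw [show lam ξ t i j (k+1) 0 = Rc ξ t i j (k+1) 0 * lam ξ t i j k 0 from rfl,
        ih 0 (Nat.zero_le k), qBinom_zero, qBinom_zero]
      rw [Finset.prod_Icc_succ_top (by omega : 0 + 1 ≤ k + 1)]
      push_cast
      ring
    · obtain ⟨m, rfl⟩ : ∃ m, p = m + 1 := ⟨p - 1, hp⟩
      rcases eq_or_lt_of_le hpk with he | hlt
      · -- p = k + 1
        rw [← he]
        rw [show lam ξ t i j (m+1) (m+1) = (if m + 1 = m + 1 then (1:K) else 0) from by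
          cases m <;> simp [lam]]
        rw [if_pos rfl, qBinom_self]
        rw [Finset.Icc_eq_empty (by omega), Finset.prod_empty]
        simp
      · -- m + 1 ≤ k, write k = m + c + 1
        obtain ⟨c, rfl⟩ : ∃ c, k = m + c + 1 := ⟨k - m - 1, by omega⟩
        have hu : (ξ ^ t : K) ≠ 0 := zpow_ne_zero t hξ
        rw [show lam ξ t i j (m+c+1+1) (m+1) =
            Rc ξ t i j (m+c+1+1) (m+1) * lam ξ t i j (m+c+1) (m+1) + lam ξ t i j (m+c+1) m from by
          rw [lam]; rw [if_neg (by omega), if_pos (by omega)]]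
        rw [ih (m+1) (by omega), ih m (by omega)]
        rw [qBinom_A]
        -- products
        rw [Finset.prod_Icc_succ_top (by omega : m+1+1 ≤ m+c+1+1)]
        rw [← Finset.Ioc_insert_left (by omega : m+1 ≤ m+c+1),
          Finset.prod_insert (by simp), ← Finset.Icc_add_one_left_eq_Ioc]
        -- unfold the three explicit Rc's
        rw [show Rc ξ t i j (m+c+1+1) (m+1) =
            (ξ^t) ^ (j - ((m:ℤ)+1)) - (ξ^t) ^ ((m:ℤ)+(c:ℤ)+1) * ξ^(-i) from by
          rw [Rc, if_pos (by omega), show t * (j - ((m+1:ℕ):ℤ)) = t * (j - ((m:ℤ)+1)) by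
            push_cast; ring, zpow_mul, show t * (((m+c+1+1:ℕ):ℤ) - 1) - i
            = t * ((m:ℤ)+(c:ℤ)+1) + (-i) by push_cast; ring, zpow_add₀ hξ, zpow_mul]]
        rw [show Rc ξ t i j (m+1) 0 =
            (ξ^t) ^ j - (ξ^t) ^ ((m:ℤ)) * ξ^(-i) from by
          rw [Rc, if_pos (by omega), show t * (j - ((0:ℕ):ℤ)) = t * j by push_cast; ring,
            zpow_mul, show t * (((m+1:ℕ):ℤ) - 1) - i = t * (m:ℤ) + (-i) by push_cast; ring,
            zpow_add₀ hξ, zpow_mul]]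
        rw [show Rc ξ t i j (m+c+1+1) 0 =
            (ξ^t) ^ j - (ξ^t) ^ ((m:ℤ)+(c:ℤ)+1) * ξ^(-i) from by
          rw [Rc, if_pos (by omega), show t * (j - ((0:ℕ):ℤ)) = t * j by push_cast; ring,
            zpow_mul, show t * (((m+c+1+1:ℕ):ℤ) - 1) - i = t * ((m:ℤ)+(c:ℤ)+1) + (-i) by
            push_cast; ring, zpow_add₀ hξ, zpow_mul]]
        -- exponents
        rw [show -(t * (((m+c+1+1:ℕ):ℤ) - ((m+1:ℕ):ℤ)) * ((m+1:ℕ):ℤ))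
            = t * (-(((c:ℤ)+1) * ((m:ℤ)+1))) by push_cast; ring, zpow_mul ξ t]
        rw [show -(t * (((m+c+1:ℕ):ℤ) - ((m+1:ℕ):ℤ)) * ((m+1:ℕ):ℤ))
            = t * (-((c:ℤ) * ((m:ℤ)+1))) by push_cast; ring, zpow_mul ξ t]
        rw [show -(t * (((m+c+1:ℕ):ℤ) - ((m:ℕ):ℤ)) * ((m:ℕ):ℤ))
            = t * (-(((c:ℤ)+1) * ((m:ℤ)))) by push_cast; ring, zpow_mul ξ t]
        have hB := qBinom_B (ξ^t) (m+c+1) m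
        simp only [show m+c+1-m = c+1 from by omega] at hB
        have hk := key (ξ^t) (ξ^(-i)) hu j m c
          (qBinom (ξ^t) (m+c+1) (m+1)) (qBinom (ξ^t) (m+c+1) m) hB
        linear_combination (-∏ l ∈ Finset.Icc (m+1+1) (m+c+1), Rc ξ t i j l 0) * hk
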